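/- Let d ≥ 1, τ > 0, and let f be a holomorphic function on the open polydisc D(0,τ)^d = {z ∈ ℂ^d : |z_j| < τ for all j} such that f is real-valued on (−τ,τ)^d ⊂ ℝ^d and f is even, i.e. f(η) = f(−η) for all η ∈ D(0,τ)^d. Then for every multi-index β ∈ ℕ^d and every ψ ∈ ℝ^d with |ψ_j| < τ for all j, one has i^{−|β|} ∂^β f(iψ) ∈ ℝ, i.e. ∂^β f(iψ) ∈ i^{|β|} ℝ. -/

import Mathlib

open Complex Filter Set

noncomputable section

def Cmap (d : ℕ) : (Fin d → ℂ) → (Fin d → ℂ) := fun z j => starRingEnd ℂ (z j)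

lemma Cmap_invol (d : ℕ) : Function.Involutive (Cmap d) := by
  intro z; funext j; simp [Cmap]

def CmapL (d : ℕ) : (Fin d → ℂ) →L[ℝ] (Fin d → ℂ) :=
  ContinuousLinearMap.pi fun j =>
    (Complex.conjCLE.toContinuousLinearMap).comp (ContinuousLinearMap.proj j)

@[simp] lemma CmapL_apply (d : ℕ) (z : Fin d → ℂ) : CmapL d z = Cmap d z := rfl

lemma norm_Cmap_le (d : ℕ) (z : Fin d → ℂ) : ‖Cmap d z‖ ≤ ‖z‖ := by
  apply pi_norm_le_iff_of_nonneg (norm_nonneg z) |>.2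
  intro j
  calc ‖Cmap d z j‖ = ‖z j‖ := by simp [Cmap]
    _ ≤ ‖z‖ := norm_le_pi_norm z j

lemma Cmap_add (d : ℕ) (x y : Fin d → ℂ) : Cmap d (x + y) = Cmap d x + Cmap d y := by
  funext j; simp [Cmap]

lemma Cmap_smul (d : ℕ) (c : ℂ) (x : Fin d → ℂ) :
    Cmap d (c • x) = (starRingEnd ℂ c) • Cmap d x := by
  funext j; simp [Cmap]

/-- Conjugation operator on continuous multilinear maps. -/
def conjMulti (d n : ℕ) (M : ContinuousMultilinearMap ℂ (fun _ : Fin n => (Fin d → ℂ)) ℂ) :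
    ContinuousMultilinearMap ℂ (fun _ : Fin n => (Fin d → ℂ)) ℂ :=
  MultilinearMap.mkContinuous
    { toFun := fun v => starRingEnd ℂ (M (fun k => Cmap d (v k)))
      map_update_add' := by
        intro _ v i x y
        have h1 : ∀ x : Fin d → ℂ, (fun k => Cmap d (Function.update v i x k)) =
            Function.update (fun k => Cmap d (v k)) i (Cmap d x) := by
          intro x; exact Function.comp_update (Cmap d) v i x
        simp only [h1, Cmap_add, M.map_update_add, map_add]
      map_update_smul' := by
        intro _ v i c x
        have h1 : ∀ x : Fin d → ℂ, (fun k => Cmap d (Function.update v i x k)) =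
            Function.update (fun k => Cmap d (v k)) i (Cmap d x) := by
          intro x; exact Function.comp_update (Cmap d) v i x
        simp only [h1, Cmap_smul, M.map_update_smul, map_mul, smul_eq_mul, map_smul]
        simp }
    ‖M‖ (by
      intro v
      calc ‖starRingEnd ℂ (M fun k => Cmap d (v k))‖ = ‖M fun k => Cmap d (v k)‖ := by
            simp
        _ ≤ ‖M‖ * ∏ k, ‖Cmap d (v k)‖ := M.le_opNorm _
        _ ≤ ‖M‖ * ∏ k, ‖v k‖ := by
            apply mul_le_mul_of_nonneg_left _ (norm_nonneg M)
            exact Finset.prod_le_prod (fun k _ => norm_nonneg _)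
              (fun k _ => norm_Cmap_le d (v k)))

@[simp] lemma conjMulti_apply (d n : ℕ)
    (M : ContinuousMultilinearMap ℂ (fun _ : Fin n => (Fin d → ℂ)) ℂ) (v : Fin n → Fin d → ℂ) :
    conjMulti d n M v = starRingEnd ℂ (M (fun k => Cmap d (v k))) := rfl

lemma conjMulti_invol (d n : ℕ) : Function.Involutive (conjMulti d n) := by
  intro M; ext v; simp [Cmap_invol d (_ : Fin d → ℂ)]

lemma conjMulti_norm_le (d n : ℕ)
    (M : ContinuousMultilinearMap ℂ (fun _ : Fin n => (Fin d → ℂ)) ℂ) :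
    ‖conjMulti d n M‖ ≤ ‖M‖ :=
  MultilinearMap.mkContinuous_norm_le _ (norm_nonneg M) _

lemma conjMulti_add (d n : ℕ)
    (M N : ContinuousMultilinearMap ℂ (fun _ : Fin n => (Fin d → ℂ)) ℂ) :
    conjMulti d n (M + N) = conjMulti d n M + conjMulti d n N := by
  ext v; simp

lemma conjMulti_smul_real (d n : ℕ) (r : ℝ)
    (M : ContinuousMultilinearMap ℂ (fun _ : Fin n => (Fin d → ℂ)) ℂ) :
    conjMulti d n (r • M) = r • conjMulti d n M := by
  ext v
  simp [Complex.ext_iff]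

lemma conjMulti_smul (d n : ℕ) (c : ℂ)
    (M : ContinuousMultilinearMap ℂ (fun _ : Fin n => (Fin d → ℂ)) ℂ) :
    conjMulti d n (c • M) = (starRingEnd ℂ c) • conjMulti d n M := by
  ext v; simp

/-- Conjugation on multilinear maps as a real-continuous-linear map. -/
def conjMultiL (d n : ℕ) :
    ContinuousMultilinearMap ℂ (fun _ : Fin n => (Fin d → ℂ)) ℂ →L[ℝ]
      ContinuousMultilinearMap ℂ (fun _ : Fin n => (Fin d → ℂ)) ℂ :=
  LinearMap.mkContinuous
    { toFun := conjMulti d n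
      map_add' := conjMulti_add d n
      map_smul' := conjMulti_smul_real d n } 1
    (by intro M; simpa using conjMulti_norm_le d n M)

@[simp] lemma conjMultiL_apply (d n : ℕ)
    (M : ContinuousMultilinearMap ℂ (fun _ : Fin n => (Fin d → ℂ)) ℂ) :
    conjMultiL d n M = conjMulti d n M := rfl

section Transport

variable {E F : Type*} [NormedAddCommGroup E] [NormedSpace ℂ E]
  [NormedAddCommGroup F] [NormedSpace ℂ F]

lemma hasFDerivAt_transport (σE : E →L[ℝ] E) (σF : F →L[ℝ] F) {B : E → F} {L : E →L[ℂ] F}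
    {z : E} (h : HasFDerivAt B L (σE z)) (L' : E →L[ℂ] F) (hL' : ∀ v, L' v = σF (L (σE v))) :
    HasFDerivAt (fun w => σF (B (σE w))) L' z := by
  have h1 : HasFDerivAt (fun w => B (σE w)) ((L.restrictScalars ℝ).comp σE) z :=
    (h.restrictScalars ℝ).comp z σE.hasFDerivAt
  have h2 : HasFDerivAt (fun w => σF (B (σE w))) (σF.comp ((L.restrictScalars ℝ).comp σE)) z :=
    σF.hasFDerivAt.comp z h1
  have heqL : σF.comp ((L.restrictScalars ℝ).comp σE) = L'.restrictScalars ℝ := by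
    ext v; simp [hL']
  rw [heqL] at h2
  refine hasFDerivAt_iff_isLittleO_nhds_zero.2 ?_
  have h3 := hasFDerivAt_iff_isLittleO_nhds_zero.1 h2
  simpa using h3

lemma differentiableAt_transport (σE : E →L[ℝ] E) (σF : F →L[ℝ] F) {B : E → F} {z : E}
    (hB : DifferentiableAt ℂ B (σE z))
    (hΦ : ∀ L : E →L[ℂ] F, ∃ L' : E →L[ℂ] F, ∀ v, L' v = σF (L (σE v))) :
    DifferentiableAt ℂ (fun w => σF (B (σE w))) z := by
  obtain ⟨L', hL'⟩ := hΦ (fderiv ℂ B (σE z))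
  exact (hasFDerivAt_transport σE σF hB.hasFDerivAt L' hL').differentiableAt

lemma fderiv_transport (σE : E →L[ℝ] E) (σF : F →L[ℝ] F)
    (hiE : Function.Involutive σE) (hiF : Function.Involutive σF)
    (hΦ : ∀ L : E →L[ℂ] F, ∃ L' : E →L[ℂ] F, ∀ v, L' v = σF (L (σE v)))
    (B : E → F) (z : E) (v : E) :
    fderiv ℂ (fun w => σF (B (σE w))) z v = σF (fderiv ℂ B (σE z) (σE v)) := by
  by_cases hB : DifferentiableAt ℂ B (σE z)
  · obtain ⟨L', hL'⟩ := hΦ (fderiv ℂ B (σE z))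
    rw [(hasFDerivAt_transport σE σF hB.hasFDerivAt L' hL').fderiv]
    exact hL' v
  · have hnd : ¬ DifferentiableAt ℂ (fun w => σF (B (σE w))) z := by
      intro hc
      apply hB
      have : DifferentiableAt ℂ (fun w => σF ((fun u => σF (B (σE u))) (σE w))) (σE z) :=
        differentiableAt_transport (B := fun u => σF (B (σE u))) (z := σE z) σE σF
          (by rw [hiE z]; exact hc) hΦ
      have heq : (fun w => σF ((fun u => σF (B (σE u))) (σE w))) = B := by
        funext w; simp only [hiE w, hiF (B w)]
      rwa [heq] at this
    rw [fderiv_zero_of_not_differentiableAt hB, fderiv_zero_of_not_differentiableAt hnd]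
    simp

end Transport

lemma conjPhi (d n : ℕ) :
    ∀ L : (Fin d → ℂ) →L[ℂ] (ContinuousMultilinearMap ℂ (fun _ : Fin n => (Fin d → ℂ)) ℂ),
    ∃ L' : (Fin d → ℂ) →L[ℂ] (ContinuousMultilinearMap ℂ (fun _ : Fin n => (Fin d → ℂ)) ℂ),
      ∀ v, L' v = conjMultiL d n (L (CmapL d v)) := by
  intro L
  refine ⟨LinearMap.mkContinuous
    { toFun := fun v => conjMulti d n (L (Cmap d v))
      map_add' := by intro x y; show conjMulti d n _ = _; rw [Cmap_add, map_add, conjMulti_add]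
      map_smul' := by
        intro c x
        show conjMulti d n _ = _
        rw [Cmap_smul, map_smul, conjMulti_smul]
        simp } ‖L‖ (fun v => ?_), fun v => rfl⟩
  calc ‖conjMulti d n (L (Cmap d v))‖ ≤ ‖L (Cmap d v)‖ := conjMulti_norm_le d n _
    _ ≤ ‖L‖ * ‖Cmap d v‖ := L.le_opNorm _
    _ ≤ ‖L‖ * ‖v‖ := mul_le_mul_of_nonneg_left (norm_Cmap_le d v) (norm_nonneg L)

/-- Reflection symmetry at the level of all iterated derivatives. -/
lemma iter_reflect (d : ℕ) (f : (Fin d → ℂ) → ℂ) (U : Set (Fin d → ℂ)) (hU : IsOpen U)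
    (hrefl : ∀ z ∈ U, f z = starRingEnd ℂ (f (Cmap d z))) :
    ∀ n, ∀ z ∈ U, ∀ v : Fin n → Fin d → ℂ,
      iteratedFDeriv ℂ n f z v =
        starRingEnd ℂ (iteratedFDeriv ℂ n f (Cmap d z) (fun k => Cmap d (v k))) := by
  intro n
  induction n with
  | zero =>
    intro z hz v
    rw [iteratedFDeriv_zero_apply, iteratedFDeriv_zero_apply]
    exact hrefl z hz
  | succ n IH =>
    intro z hz v
    rw [iteratedFDeriv_succ_apply_left]
    have hEqOn : Set.EqOn (iteratedFDeriv ℂ n f)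
        (fun w => conjMultiL d n (iteratedFDeriv ℂ n f (CmapL d w))) U := by
      intro w hw
      ext v'
      simp only [conjMultiL_apply, conjMulti_apply, CmapL_apply]
      exact IH w hw v'
    have hEv : (iteratedFDeriv ℂ n f) =ᶠ[nhds z]
        (fun w => conjMultiL d n (iteratedFDeriv ℂ n f (CmapL d w))) :=
      Filter.eventuallyEq_of_mem (hU.mem_nhds hz) hEqOn
    rw [hEv.fderiv_eq]
    have htr := fderiv_transport (CmapL d) (conjMultiL d n)
      (fun x => Cmap_invol d x) (fun M => conjMulti_invol d n M)
      (conjPhi d n) (iteratedFDeriv ℂ n f) z (v 0)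
    rw [htr]
    simp only [conjMultiL_apply, conjMulti_apply, CmapL_apply]
    rw [iteratedFDeriv_succ_apply_left]
    rfl

def conjL : ℂ →L[ℝ] ℂ := Complex.conjCLE.toContinuousLinearMap

@[simp] lemma conjL_apply (v : ℂ) : conjL v = starRingEnd ℂ v := rfl

lemma conjPhiScalar : ∀ L : ℂ →L[ℂ] ℂ, ∃ L' : ℂ →L[ℂ] ℂ, ∀ v, L' v = conjL (L (conjL v)) := by
  intro L
  refine ⟨(starRingEnd ℂ (L 1)) • (ContinuousLinearMap.id ℂ ℂ), fun v => ?_⟩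
  have hLv : L (starRingEnd ℂ v) = (starRingEnd ℂ v) * L 1 := by
    have := L.map_smul (starRingEnd ℂ v) 1
    simpa [smul_eq_mul] using this
  simp [hLv, map_mul, mul_comm]

lemma diffAt_conj_comp {A : ℂ → ℂ} {w : ℂ} (h : DifferentiableAt ℂ A (starRingEnd ℂ w)) :
    DifferentiableAt ℂ (fun u => starRingEnd ℂ (A (starRingEnd ℂ u))) w := by
  have := differentiableAt_transport (E := ℂ) (F := ℂ) conjL conjL (B := A) (z := w)
    (by simpa using h) conjPhiScalar
  simpa using this

lemma iter_even (d : ℕ) (f : (Fin d → ℂ) → ℂ) (U : Set (Fin d → ℂ)) (hU : IsOpen U)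
    (hsym : (fun z : Fin d → ℂ => -z) ⁻¹' U = U)
    (heven : ∀ z ∈ U, f (-z) = f z) (n : ℕ) :
    ∀ z ∈ U, ∀ v : Fin n → Fin d → ℂ,
      iteratedFDeriv ℂ n f z v = iteratedFDeriv ℂ n f (-z) (fun k => -(v k)) := by
  intro z hz v
  set negE : (Fin d → ℂ) ≃L[ℂ] (Fin d → ℂ) := ContinuousLinearEquiv.neg ℂ with hnegE
  have hco : ⇑negE = fun z : Fin d → ℂ => -z := rfl
  have hmem : negE z ∈ U := by
    have : z ∈ (fun z : Fin d → ℂ => -z) ⁻¹' U := by rw [hsym]; exact hz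
    exact this
  have h1 := ContinuousLinearEquiv.iteratedFDerivWithin_comp_right (𝕜 := ℂ) negE f
    hU.uniqueDiffOn hmem n
  rw [hco, hsym] at h1
  have h2 : iteratedFDerivWithin ℂ n (f ∘ fun z : Fin d → ℂ => -z) U z
      = iteratedFDerivWithin ℂ n f U z :=
    iteratedFDerivWithin_congr (fun w hw => heven w hw) hz n
  rw [h2] at h1
  have h3 := (iteratedFDerivWithin_of_isOpen (𝕜 := ℂ) (f := f) n hU) hz
  have h4 := (iteratedFDerivWithin_of_isOpen (𝕜 := ℂ) (f := f) n hU) hmem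
  simp only [hco] at h4
  rw [h3] at h1
  simp only [h4] at h1
  have := congrArg (fun M => M v) h1
  simp at this; exact this

lemma reflect_on_U (d : ℕ) (τ : ℝ) (hτ : 0 < τ) (f : (Fin d → ℂ) → ℂ)
    (hf : DifferentiableOn ℂ f {z : Fin d → ℂ | ∀ j, ‖z j‖ < τ})
    (hreal : ∀ x : Fin d → ℝ, (∀ j, |x j| < τ) → (f (fun j => (x j : ℂ))).im = 0) :
    ∀ z ∈ {z : Fin d → ℂ | ∀ j, ‖z j‖ < τ},
      f z = starRingEnd ℂ (f (Cmap d z)) := by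
  set U : Set (Fin d → ℂ) := {z : Fin d → ℂ | ∀ j, ‖z j‖ < τ} with hUdef
  set D : Set ℂ := Metric.ball (0 : ℂ) τ with hDdef
  have hDmem : ∀ w : ℂ, w ∈ D ↔ ‖w‖ < τ := by
    intro w; simp [hDdef, Metric.mem_ball, Complex.dist_eq]
  have hDopen : IsOpen D := Metric.isOpen_ball
  -- differentiability of coordinate slices
  have hslice : ∀ (y : Fin d → ℂ) (jk : Fin d), (∀ j, j ≠ jk → ‖y j‖ < τ) →
      DifferentiableOn ℂ (fun w => f (Function.update y jk w)) D := by
    intro y jk hy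
    apply hf.comp
    · apply Differentiable.differentiableOn
      rw [differentiable_pi]
      intro j
      by_cases h : j = jk
      · subst h; simpa [Function.update_apply] using differentiable_id
      · simpa [Function.update_apply, h] using differentiable_const (y j)
    · intro w hw j
      rw [Function.update_apply]
      split_ifs with h
      · exact (hDmem w).1 hw
      · exact hy j h
  -- the main induction on the number of possibly-non-real coordinates
  have main : ∀ k : ℕ, ∀ z ∈ U, (∀ j : Fin d, k ≤ (j : ℕ) → (z j).im = 0) →
      f z = starRingEnd ℂ (f (Cmap d z)) := by
    intro k
    induction k with
    | zero =>
      intro z hz hk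
      have hCz : Cmap d z = z := by
        funext j; exact Complex.conj_eq_iff_im.2 (hk j (Nat.zero_le _))
      rw [hCz]
      set x : Fin d → ℝ := fun j => (z j).re with hx
      have hxj : ∀ j, |x j| < τ :=
        fun j => lt_of_le_of_lt (Complex.abs_re_le_norm (z j)) (hz j)
      have hzx : z = fun j => ((x j : ℝ) : ℂ) := by
        funext j
        exact Complex.ext (by simp [hx]) (by simp [hk j (Nat.zero_le _)])
      have him : (f z).im = 0 := by
        rw [hzx]
        exact hreal x hxj
      exact (Complex.conj_eq_iff_im.2 him).symm
    | succ k IH =>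
      intro z hz hk
      by_cases hkd : k < d
      · set jk : Fin d := ⟨k, hkd⟩ with hjk
        set A₁ : ℂ → ℂ := fun w => f (Function.update z jk w) with hA₁
        set A₂ : ℂ → ℂ := fun w => starRingEnd ℂ (f (Cmap d (Function.update z jk w))) with hA₂
        have hupd : ∀ w : ℂ, Cmap d (Function.update z jk w) =
            Function.update (Cmap d z) jk (starRingEnd ℂ w) := by
          intro w; funext j
          by_cases h : j = jk
          · subst h; simp [Cmap]
          · simp [Cmap, Function.update_apply, h]
        have hd₁ : DifferentiableOn ℂ A₁ D := hslice z jk (fun j _ => hz j)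
        have hd₂ : DifferentiableOn ℂ A₂ D := by
          have hG : DifferentiableOn ℂ (fun u => f (Function.update (Cmap d z) jk u)) D :=
            hslice (Cmap d z) jk (fun j _ => by simpa [Cmap] using hz j)
          have hA₂eq : A₂ = fun u => starRingEnd ℂ
              ((fun u' => f (Function.update (Cmap d z) jk u')) (starRingEnd ℂ u)) := by
            funext u
            show starRingEnd ℂ (f (Cmap d (Function.update z jk u))) =
              starRingEnd ℂ (f (Function.update (Cmap d z) jk (starRingEnd ℂ u)))
            rw [hupd]
          rw [hA₂eq]
          intro w hw
          have hcw : (starRingEnd ℂ w) ∈ D := by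
            rw [hDmem] at hw ⊢; simpa using hw
          exact (diffAt_conj_comp
            ((hG _ hcw).differentiableAt (hDopen.mem_nhds hcw))).differentiableWithinAt
        -- they agree frequently near 0
        have hfreq : ∃ᶠ w in nhdsWithin (0 : ℂ) {(0 : ℂ)}ᶜ, A₁ w = A₂ w := by
          have ht : Tendsto (fun t : ℝ => (t : ℂ)) (nhdsWithin 0 (Ioi 0))
              (nhdsWithin (0 : ℂ) {(0 : ℂ)}ᶜ) := by
            rw [tendsto_nhdsWithin_iff]
            constructor
            · have := (Complex.continuous_ofReal.tendsto 0).mono_left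
                (nhdsWithin_le_nhds (s := Ioi (0:ℝ)))
              simpa using this
            · filter_upwards [self_mem_nhdsWithin] with t ht
              simp only [mem_compl_iff, mem_singleton_iff]
              exact_mod_cast (ne_of_gt ht)
          have hev : ∀ᶠ t : ℝ in nhdsWithin 0 (Ioi 0), A₁ ((t : ℝ) : ℂ) = A₂ ((t : ℝ) : ℂ) := by
            filter_upwards [Ioo_mem_nhdsGT_of_mem (Set.mem_Ico.2 ⟨le_refl (0:ℝ), hτ⟩)] with t htτ
            have hz' : Function.update z jk ((t : ℝ) : ℂ) ∈ U := by
              intro j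
              rw [Function.update_apply]
              split_ifs with h
              · simp only [Complex.norm_real, Real.norm_eq_abs]
                rw [abs_of_pos htτ.1]; exact htτ.2
              · exact hz j
            have hcoords : ∀ j : Fin d, k ≤ (j : ℕ) →
                ((Function.update z jk ((t : ℝ) : ℂ)) j).im = 0 := by
              intro j hj
              rw [Function.update_apply]
              split_ifs with h
              · simp
              · apply hk j
                rcases Nat.lt_or_ge (j : ℕ) (k+1) with h' | h'
                · exfalso
                  apply h
                  have : (j : ℕ) = k := Nat.le_antisymm (Nat.lt_succ_iff.1 h') hj
                  exact Fin.ext this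
                · exact h'
            have := IH (Function.update z jk ((t : ℝ) : ℂ)) hz' hcoords
            rw [hA₁, hA₂]
            exact this
          exact ht.frequently hev.frequently
        have heqOn : EqOn A₁ A₂ D := by
          refine AnalyticOnNhd.eqOn_of_preconnected_of_frequently_eq
            (hd₁.analyticOnNhd hDopen) (hd₂.analyticOnNhd hDopen)
            ?_ ?_ hfreq
          · rw [hDdef]; exact (convex_ball (0:ℂ) τ).isPreconnected
          · rw [hDmem]; simpa using hτ
        have hzjk : z jk ∈ D := by rw [hDmem]; exact hz jk
        have := heqOn hzjk
        simp only [hA₁, hA₂, Function.update_eq_self] at this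
        exact this
      · exact IH z hz (fun j hj =>
          absurd (lt_of_lt_of_le j.isLt (Nat.not_lt.1 hkd)) (Nat.not_lt.2 hj))
  intro z hz
  exact main d z hz (fun j hj => absurd (lt_of_lt_of_le j.isLt hj) (lt_irrefl _))

/-- Let `f` be holomorphic on the open polydisc `D(0,τ)^d ⊆ ℂ^d`,
real-valued on real points and even. Then for every multi-index (encoded by a choice of `n`
coordinate directions `m : Fin n → Fin d`) and every real point `ψ` of the polydisc, the
corresponding partial derivative of `f` at the purely imaginary point `iψ` lies in `i^n ℝ`. -/
theorem stmt_12 (d : ℕ) (hd : 1 ≤ d) (τ : ℝ) (hτ : 0 < τ)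
    (f : (Fin d → ℂ) → ℂ)
    (hf : DifferentiableOn ℂ f {z : Fin d → ℂ | ∀ j, ‖z j‖ < τ})
    (hreal : ∀ x : Fin d → ℝ, (∀ j, |x j| < τ) → (f (fun j => (x j : ℂ))).im = 0)
    (heven : ∀ z : Fin d → ℂ, (∀ j, ‖z j‖ < τ) → f (-z) = f z)
    (n : ℕ) (m : Fin n → Fin d) (ψ : Fin d → ℝ) (hψ : ∀ j, |ψ j| < τ) :
    ∃ t : ℝ, iteratedFDeriv ℂ n f (fun j => (ψ j : ℂ) * Complex.I)
        (fun k => Pi.single (m k) 1) = Complex.I ^ n * t := by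
  set U : Set (Fin d → ℂ) := {z : Fin d → ℂ | ∀ j, ‖z j‖ < τ} with hUdef
  have hU : IsOpen U := by
    have : U = ⋂ j, (fun z : Fin d → ℂ => z j) ⁻¹' (Metric.ball 0 τ) := by
      ext z
      simp [hUdef, Metric.mem_ball, Complex.dist_eq]
    rw [this]
    exact isOpen_iInter_of_finite fun j =>
      (continuous_apply j).isOpen_preimage _ Metric.isOpen_ball
  have hsym : (fun z : Fin d → ℂ => -z) ⁻¹' U = U := by
    ext z
    simp [hUdef]
  set z0 : Fin d → ℂ := fun j => (ψ j : ℂ) * Complex.I with hz0def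
  have hz0 : z0 ∈ U := by
    intro j
    simp only [hz0def, norm_mul, Complex.norm_real, Real.norm_eq_abs, Complex.norm_I, mul_one]
    exact hψ j
  have hz0n : -z0 ∈ U := by rw [← hsym] at hz0; exact hz0
  set v : Fin n → Fin d → ℂ := fun k => Pi.single (m k) 1 with hvdef
  have hCv : ∀ k, Cmap d (v k) = v k := by
    intro k
    funext j
    simp only [hvdef, Cmap, Pi.single_apply]
    split_ifs <;> simp
  have hCz0 : Cmap d z0 = -z0 := by
    funext j
    simp [Cmap, hz0def, Complex.conj_ofReal, map_mul, Complex.conj_I]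
  have hrefl := reflect_on_U d τ hτ f hf hreal
  -- reflection identity for the iterated derivative
  have h1 := iter_reflect d f U hU (fun z hz => hrefl z hz) n z0 hz0 v
  rw [hCz0] at h1
  have hCvv : (fun k => Cmap d (v k)) = v := funext hCv
  rw [hCvv] at h1
  -- parity identity
  have h2 := iter_even d f U hU hsym (fun z hz => heven z hz) n (-z0) hz0n v
  rw [neg_neg] at h2
  have h3 : iteratedFDeriv ℂ n f z0 (fun k => -(v k)) =
      ((-1 : ℂ) ^ n) • iteratedFDeriv ℂ n f z0 v := by
    have hneg : (fun k => -(v k)) = fun k => (-1 : ℂ) • (v k) := by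
      funext k; simp
    rw [hneg, ContinuousMultilinearMap.map_smul_univ]
    simp
  set w : ℂ := iteratedFDeriv ℂ n f z0 v with hwdef
  have hkey : w = (-1 : ℂ) ^ n * starRingEnd ℂ w := by
    calc w = starRingEnd ℂ (iteratedFDeriv ℂ n f (-z0) v) := h1
      _ = starRingEnd ℂ (((-1 : ℂ) ^ n) • w) := by rw [h2, h3]
      _ = (-1 : ℂ) ^ n * starRingEnd ℂ w := by
          simp [smul_eq_mul, map_mul]
  have hIn : (Complex.I : ℂ) ^ n ≠ 0 := pow_ne_zero n Complex.I_ne_zero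
  have hconjw : starRingEnd ℂ w = (-1 : ℂ) ^ n * w := by
    have := congrArg (starRingEnd ℂ) hkey
    simpa [map_mul] using this
  have hconjdiv : starRingEnd ℂ (w / Complex.I ^ n) = w / Complex.I ^ n := by
    have hconjI : starRingEnd ℂ (Complex.I ^ n) = (-1 : ℂ) ^ n * Complex.I ^ n := by
      rw [map_pow, Complex.conj_I, neg_pow]
    rw [map_div₀, hconjw, hconjI]
    rw [mul_div_mul_left]
    exact pow_ne_zero n (by norm_num)
  refine ⟨(w / Complex.I ^ n).re, ?_⟩
  have hre : ((w / Complex.I ^ n).re : ℂ) = w / Complex.I ^ n :=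
    Complex.conj_eq_iff_re.1 hconjdiv
  show w = Complex.I ^ n * ((w / Complex.I ^ n).re : ℂ)
  rw [hre]
  field_simp
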